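/- The automorphism group of a finitely generated residually finite group is residually finite. -/

import Mathlib

/-- A group `G` is residually finite if every `g ≠ 1` is sent to a non-identity element
by some homomorphism of `G` onto a finite group. -/
def ResiduallyFinite (G : Type*) [Group G] : Prop :=
  ∀ g : G, g ≠ 1 →
    ∃ (H : Type) (_ : Group H) (_ : Finite H) (f : G →* H),
      Function.Surjective f ∧ f g ≠ 1

/-- A finitely generated group has finitely many homomorphisms to any finite monoid. -/
lemma finite_monoidHom_of_fg (G : Type*) [Group G] (hfg : Group.FG G)
    (H : Type*) [Group H] [Finite H] : Finite (G →* H) := by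
  obtain ⟨S, hS, hSfin⟩ := Group.fg_iff.mp hfg
  have : Finite S := hSfin
  apply Finite.of_injective (fun f : G →* H => (fun s : S => f s))
  intro f g h
  exact MonoidHom.eq_of_eqOn_dense hS (fun x hx => congrFun h ⟨x, hx⟩)

/-- The automorphism group of a finitely generated residually finite group is
residually finite. -/
theorem aut_residuallyFinite (G : Type*) [Group G] (hfg : Group.FG G)
    (hG : ResiduallyFinite G) : ResiduallyFinite (MulAut G) := by
  intro φ hφ
  -- find g moved by φ
  obtain ⟨g, hg⟩ : ∃ g : G, φ g ≠ g := by
    by_contra h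
    push_neg at h
    exact hφ (MulEquiv.ext h)
  have hg1 : φ g * g⁻¹ ≠ 1 := by
    intro h
    exact hg (by rwa [mul_inv_eq_one] at h)
  obtain ⟨H, _, _, f, -, hf⟩ := hG (φ g * g⁻¹) hg1
  -- the "diagonal" homomorphism into all finite quotients of type H
  have : Finite (G →* H) := finite_monoidHom_of_fg G hfg H
  let P : G →* ((G →* H) → H) :=
    { toFun := fun x => fun f => f x
      map_one' := by ext f; simp
      map_mul' := fun x y => by ext f; simp }
  set K : Subgroup G := P.ker with hK
  -- membership criterion
  have hmem : ∀ x : G, x ∈ K ↔ ∀ f : G →* H, f x = 1 := by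
    intro x
    constructor
    · intro hx f
      exact congrFun hx f
    · intro hx
      ext f
      exact hx f
  -- K is characteristic
  have hmap : ∀ ψ : G ≃* G, K.map ψ.toMonoidHom = K := by
    intro ψ
    ext x
    rw [Subgroup.mem_map_equiv]
    simp only [hmem]
    constructor
    · intro h f
      have := h (f.comp ψ.toMonoidHom)
      simpa using this
    · intro h f
      have := h (f.comp ψ.symm.toMonoidHom)
      simpa using this
  -- the quotient is finite
  have hQfin : Finite (G ⧸ K) :=
    Finite.of_injective _ (QuotientGroup.kerLift_injective P)
  -- induced map on automorphism groups
  let A : MulAut G →* MulAut (G ⧸ K) :=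
    { toFun := fun ψ => QuotientGroup.congr K K ψ (hmap ψ)
      map_one' := by
        ext x
        induction x using QuotientGroup.induction_on with
        | H x => exact QuotientGroup.congr_mk _ _ _ _ x
      map_mul' := fun ψ χ => by
        ext x
        induction x using QuotientGroup.induction_on with
        | H x =>
          exact (QuotientGroup.congr_mk K K (ψ * χ) _ x).trans
            ((QuotientGroup.congr_mk K K ψ (hmap ψ) (χ x)).symm.trans
              (congrArg _ (QuotientGroup.congr_mk K K χ (hmap χ) x).symm)) }
  -- A φ is nontrivial
  have hAg : (A φ) ((g : G ⧸ K)) = ((φ g : G) : G ⧸ K) := QuotientGroup.congr_mk K K φ (hmap φ) g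
  have hne : ((φ g : G) : G ⧸ K) ≠ ((g : G) : G ⧸ K) := by
    intro h
    rw [QuotientGroup.eq] at h
    rw [hmem] at h
    have := h f
    apply hf
    have h2 : f (φ g) = f g := by
      have h3 : f ((φ g)⁻¹) * f g = 1 := by simpa using this
      have h4 : f ((φ g)⁻¹) = (f (φ g))⁻¹ := map_inv f _
      rw [h4, inv_mul_eq_one] at h3
      exact h3
    simp [map_mul, h2, map_inv]
  -- pass to permutations of a Fin type (to land in `Type 0`)
  have : Fintype (G ⧸ K) := Fintype.ofFinite _
  set n := Fintype.card (G ⧸ K) with hn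
  let e : (G ⧸ K) ≃ Fin n := Fintype.equivFin _
  let c : MulAut G →* Equiv.Perm (Fin n) :=
    { toFun := fun ψ => (e.symm.trans (A ψ).toEquiv).trans e
      map_one' := by ext x; simp
      map_mul' := fun ψ χ => by
        ext x
        simp [Equiv.Perm.mul_apply] }
  refine ⟨c.range, inferInstance, inferInstance, c.rangeRestrict,
    c.rangeRestrict_surjective, ?_⟩
  intro h
  have hc : c φ = 1 := by
    have := congrArg (Subtype.val) h
    simpa using this
  have := congrFun (congrArg (fun p : Equiv.Perm (Fin n) => (p : Fin n → Fin n)) hc)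
    (e ((g : G ⧸ K)))
  simp only [Equiv.Perm.coe_one, id_eq] at this
  apply hne
  have h5 : e ((A φ) ((g : G ⧸ K))) = e ((g : G ⧸ K)) := by
    simpa [c] using this
  rw [hAg] at h5
  exact e.injective h5
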